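/- Let ρ > 0. There exists a constant C > 0, depending only on ρ, such that for every R > ρ, every real x ≥ 1, and every twice continuously differentiable function G : [ρ,R] → ℂ satisfying |G(λ)| ≤ 1, |G′(λ)| ≤ 1/λ and |G″(λ)| ≤ 1/λ² for all λ ∈ [ρ,R], one has | ∫_ρ^R e^{iλx} G(λ) dλ | ≤ C / x. -/

import Mathlib

open Set intervalIntegral

theorem stmt15 (ρ : ℝ) (hρ : 0 < ρ) :
    ∃ C : ℝ, 0 < C ∧
      ∀ R : ℝ, ρ < R → ∀ x : ℝ, 1 ≤ x → ∀ G : ℝ → ℂ,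
        ContDiffOn ℝ 2 G (Set.Icc ρ R) →
        (∀ l ∈ Set.Icc ρ R, ‖G l‖ ≤ 1) →
        (∀ l ∈ Set.Icc ρ R, ‖derivWithin G (Set.Icc ρ R) l‖ ≤ 1 / l) →
        (∀ l ∈ Set.Icc ρ R,
          ‖derivWithin (derivWithin G (Set.Icc ρ R)) (Set.Icc ρ R) l‖ ≤ 1 / l ^ 2) →
        ‖∫ l in ρ..R, Complex.exp (Complex.I * (l : ℂ) * (x : ℂ)) * G l‖ ≤ C / x := by
  refine ⟨2 + 3 / ρ, by positivity, ?_⟩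
  intro R hR x hx G hG hG0 hG1 hG2
  have hx0 : (0:ℝ) < x := lt_of_lt_of_le one_pos hx
  have hρR : ρ ≤ R := hR.le
  set s : Set ℝ := Set.Icc ρ R with hs
  have huIcc : Set.uIcc ρ R = s := Set.uIcc_of_le hρR
  have hud : UniqueDiffOn ℝ s := uniqueDiffOn_Icc hR
  set g₁ : ℝ → ℂ := derivWithin G s with hg₁def
  set g₂ : ℝ → ℂ := derivWithin g₁ s with hg₂def
  set e : ℝ → ℂ := fun l => Complex.exp (Complex.I * (l : ℂ) * (x : ℂ)) with he_def
  set c : ℂ := Complex.I * (x : ℂ) with hc_def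
  have hc : c ≠ 0 := by
    exact mul_ne_zero Complex.I_ne_zero (Complex.ofReal_ne_zero.2 (ne_of_gt hx0))
  set v : ℝ → ℂ := fun l => e l / c with hv_def
  have hnc : ‖c‖ = x := by
    simp [hc_def, Complex.norm_real, abs_of_pos hx0]
  have hne : ∀ l : ℝ, ‖e l‖ = 1 := by
    intro l
    rw [he_def]
    simp [Complex.norm_exp]
  have hnv : ∀ l : ℝ, ‖v l‖ = 1 / x := by
    intro l
    rw [hv_def]
    simp [norm_div, hne, hnc]
  -- derivative of e and v
  have he' : ∀ l : ℝ, HasDerivAt e (e l * c) l := by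
    intro l
    have h0 : HasDerivAt (fun y : ℝ => c * (y : ℂ)) c l := by
      simpa using (Complex.ofRealCLM.hasDerivAt (x := l)).const_mul c
    have heq : (fun y : ℝ => Complex.I * (y : ℂ) * (x : ℂ)) = fun y : ℝ => c * (y : ℂ) := by
      funext y; rw [hc_def]; ring
    have h1 : HasDerivAt (fun y : ℝ => Complex.I * (y : ℂ) * (x : ℂ)) c l := heq ▸ h0
    exact h1.cexp
  have hv' : ∀ l : ℝ, HasDerivAt v (e l) l := by
    intro l
    have := (he' l).div_const c
    simpa [mul_div_assoc, div_self hc] using this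
  -- regularity of g₁ and g₂
  have hg₁smooth : ContDiffOn ℝ 1 g₁ s := hG.derivWithin hud (by norm_num)
  have hg₁cont : ContinuousOn g₁ s := hg₁smooth.continuousOn
  have hg₂smooth : ContDiffOn ℝ 0 g₂ s := hg₁smooth.derivWithin hud (by norm_num)
  have hg₂cont : ContinuousOn g₂ s := hg₂smooth.continuousOn
  have hecont : Continuous e := by
    apply Complex.continuous_exp.comp
    fun_prop
  have hvcont : Continuous v := hecont.div_const c
  have hGd : ∀ l ∈ Set.uIcc ρ R, HasDerivWithinAt G (g₁ l) (Set.uIcc ρ R) l := by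
    intro l hl
    rw [huIcc] at hl ⊢
    exact ((hG.differentiableOn (by norm_num)) l hl).hasDerivWithinAt
  have hg₁d : ∀ l ∈ Set.uIcc ρ R, HasDerivWithinAt g₁ (g₂ l) (Set.uIcc ρ R) l := by
    intro l hl
    rw [huIcc] at hl ⊢
    exact ((hg₁smooth.differentiableOn (by norm_num)) l hl).hasDerivWithinAt
  have hvd : ∀ l ∈ Set.uIcc ρ R, HasDerivWithinAt v (e l) (Set.uIcc ρ R) l :=
    fun l _ => (hv' l).hasDerivWithinAt
  have hg₁int : IntervalIntegrable g₁ MeasureTheory.volume ρ R :=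
    (huIcc ▸ hg₁cont).intervalIntegrable
  have hg₂int : IntervalIntegrable g₂ MeasureTheory.volume ρ R :=
    (huIcc ▸ hg₂cont).intervalIntegrable
  have heint : IntervalIntegrable e MeasureTheory.volume ρ R :=
    hecont.intervalIntegrable _ _
  -- first integration by parts
  have eq1 : (∫ l in ρ..R, G l * e l)
      = G R * v R - G ρ * v ρ - ∫ l in ρ..R, g₁ l * v l :=
    integral_mul_deriv_eq_deriv_mul_of_hasDerivWithinAt hGd hvd hg₁int heint
  have eq2 : (∫ l in ρ..R, g₁ l * e l)
      = g₁ R * v R - g₁ ρ * v ρ - ∫ l in ρ..R, g₂ l * v l :=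
    integral_mul_deriv_eq_deriv_mul_of_hasDerivWithinAt hg₁d hvd hg₂int heint
  have eqv : (∫ l in ρ..R, g₁ l * v l) = (∫ l in ρ..R, g₁ l * e l) / c := by
    rw [← intervalIntegral.integral_div]
    refine intervalIntegral.integral_congr fun l _ => ?_
    rw [hv_def, mul_div_assoc]
  have hρs : ρ ∈ s := Set.mem_Icc.2 ⟨le_refl ρ, hρR⟩
  have hRs : R ∈ s := Set.mem_Icc.2 ⟨hρR, le_refl R⟩
  -- bound on ∫ g₂ v
  have hJ : ‖∫ l in ρ..R, g₂ l * v l‖ ≤ 1 / (ρ * x) := by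
    have hbnd : ∀ l ∈ Set.Icc ρ R, ‖g₂ l * v l‖ ≤ (l ^ 2)⁻¹ * x⁻¹ := by
      intro l hl
      have hlx : (0:ℝ) < l := lt_of_lt_of_le hρ hl.1
      have h1 : ‖g₂ l‖ ≤ (l ^ 2)⁻¹ := by rw [← one_div]; exact hG2 l hl
      rw [norm_mul, hnv, one_div]
      exact mul_le_mul_of_nonneg_right h1 (by positivity)
    have hint2 : (∫ l in ρ..R, (l ^ 2)⁻¹ * x⁻¹) = (ρ⁻¹ - R⁻¹) * x⁻¹ := by
      rw [intervalIntegral.integral_mul_const]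
      congr 1
      have : (∫ l in ρ..R, (l ^ 2)⁻¹) = -R⁻¹ - -ρ⁻¹ := by
        refine intervalIntegral.integral_eq_sub_of_hasDerivAt (f := fun t : ℝ => -t⁻¹)
          (fun t ht => ?_) ?_
        · rw [huIcc] at ht
          have ht0 : t ≠ 0 := ne_of_gt (lt_of_lt_of_le hρ ht.1)
          simpa using (hasDerivAt_inv ht0).fun_neg
        · apply ContinuousOn.intervalIntegrable
          apply ContinuousOn.inv₀ (by fun_prop)
          intro t ht
          rw [huIcc] at ht
          have : (0:ℝ) < t := lt_of_lt_of_le hρ ht.1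
          positivity
      rw [this]; ring
    calc ‖∫ l in ρ..R, g₂ l * v l‖ ≤ ∫ l in ρ..R, (l ^ 2)⁻¹ * x⁻¹ := by
          refine le_trans (intervalIntegral.norm_integral_le_integral_norm hρR) ?_
          refine intervalIntegral.integral_mono_on hρR ?_ ?_ hbnd
          · apply ContinuousOn.intervalIntegrable
            rw [huIcc]
            exact (hg₂cont.mul hvcont.continuousOn).norm
          · apply ContinuousOn.intervalIntegrable
            rw [huIcc]
            apply ContinuousOn.mul _ continuousOn_const
            apply ContinuousOn.inv₀ (by fun_prop)
            intro t ht
            have : (0:ℝ) < t := lt_of_lt_of_le hρ ht.1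
            positivity
      _ = (ρ⁻¹ - R⁻¹) * x⁻¹ := hint2
      _ ≤ ρ⁻¹ * x⁻¹ := by
          have : (0:ℝ) < R := lt_trans hρ hR
          have : (0:ℝ) ≤ R⁻¹ := by positivity
          nlinarith [inv_nonneg.2 hx0.le]
      _ = 1 / (ρ * x) := by rw [one_div, mul_inv]
  -- bound pieces
  have hb1 : ‖G R * v R‖ ≤ 1 / x := by
    rw [norm_mul, hnv]
    calc ‖G R‖ * (1 / x) ≤ 1 * (1 / x) :=
          mul_le_mul_of_nonneg_right (hG0 R hRs) (by positivity)
      _ = 1 / x := one_mul _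
  have hb2 : ‖G ρ * v ρ‖ ≤ 1 / x := by
    rw [norm_mul, hnv]
    calc ‖G ρ‖ * (1 / x) ≤ 1 * (1 / x) :=
          mul_le_mul_of_nonneg_right (hG0 ρ hρs) (by positivity)
      _ = 1 / x := one_mul _
  have hb3 : ‖g₁ R * v R‖ ≤ 1 / (ρ * x) := by
    rw [norm_mul, hnv]
    have h1 : ‖g₁ R‖ ≤ 1 / ρ := le_trans (hG1 R hRs) (by
      rw [div_le_div_iff₀ (lt_trans hρ hR) hρ]; nlinarith)
    calc ‖g₁ R‖ * (1 / x) ≤ (1 / ρ) * (1 / x) :=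
          mul_le_mul_of_nonneg_right h1 (by positivity)
      _ = 1 / (ρ * x) := by rw [div_mul_div_comm, one_mul]
  have hb4 : ‖g₁ ρ * v ρ‖ ≤ 1 / (ρ * x) := by
    rw [norm_mul, hnv]
    calc ‖g₁ ρ‖ * (1 / x) ≤ (1 / ρ) * (1 / x) :=
          mul_le_mul_of_nonneg_right (hG1 ρ hρs) (by positivity)
      _ = 1 / (ρ * x) := by rw [div_mul_div_comm, one_mul]
  -- bound on ∫ g₁ e
  have hK : ‖∫ l in ρ..R, g₁ l * e l‖ ≤ 3 / (ρ * x) := by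
    rw [eq2]
    calc ‖g₁ R * v R - g₁ ρ * v ρ - ∫ l in ρ..R, g₂ l * v l‖
        ≤ ‖g₁ R * v R - g₁ ρ * v ρ‖ + ‖∫ l in ρ..R, g₂ l * v l‖ := norm_sub_le _ _
      _ ≤ (‖g₁ R * v R‖ + ‖g₁ ρ * v ρ‖) + ‖∫ l in ρ..R, g₂ l * v l‖ := by
          gcongr; exact norm_sub_le _ _
      _ ≤ (1 / (ρ * x) + 1 / (ρ * x)) + 1 / (ρ * x) := by gcongr
      _ = 3 / (ρ * x) := by ring
  -- main bound
  have hmain : (∫ l in ρ..R, Complex.exp (Complex.I * (l : ℂ) * (x : ℂ)) * G l)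
      = ∫ l in ρ..R, G l * e l := by
    refine intervalIntegral.integral_congr fun l _ => ?_
    rw [he_def, mul_comm]
  rw [hmain, eq1, eqv]
  calc ‖G R * v R - G ρ * v ρ - (∫ l in ρ..R, g₁ l * e l) / c‖
      ≤ (‖G R * v R‖ + ‖G ρ * v ρ‖) + ‖(∫ l in ρ..R, g₁ l * e l) / c‖ := by
        refine le_trans (norm_sub_le _ _) ?_
        gcongr; exact norm_sub_le _ _
    _ ≤ (1 / x + 1 / x) + (3 / (ρ * x)) / x := by
        rw [norm_div, hnc]
        gcongr
    _ ≤ (2 + 3 / ρ) / x := by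
        have h1 : 3 / (ρ * x) / x ≤ 3 / (ρ * x) :=
          div_le_self (by positivity) hx
        have h2 : 1 / x + 1 / x + 3 / (ρ * x) = (2 + 3 / ρ) / x := by
          field_simp
          ring
        linarith
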